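/- Let A ⊆ ℤ^d be a finite set such that the semigroup ℕA generates ℤ^d as a group. Then for any β, γ ∈ ℤ^d, the intersection (β + ℕA) ∩ (γ + ℕA) contains a translated copy γ'' + ℕA of the semigroup for some γ'' ∈ ℤ^d. -/

import Mathlib

open scoped Pointwise

lemma mem_closure_sub {G : Type*} [AddCommGroup G] (A : Set G) (x : G)
    (hx : x ∈ AddSubgroup.closure A) :
    ∃ a ∈ AddSubmonoid.closure A, ∃ b ∈ AddSubmonoid.closure A, x = a - b := by
  induction hx using AddSubgroup.closure_induction with
  | mem y hy => exact ⟨y, AddSubmonoid.subset_closure hy, 0, (AddSubmonoid.closure A).zero_mem, by simp⟩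
  | zero => exact ⟨0, (AddSubmonoid.closure A).zero_mem, 0, (AddSubmonoid.closure A).zero_mem, by simp⟩
  | add x y _ _ hx hy =>
    obtain ⟨a, ha, b, hb, rfl⟩ := hx
    obtain ⟨c, hc, e, he, rfl⟩ := hy
    exact ⟨a + c, add_mem ha hc, b + e, add_mem hb he, by abel⟩
  | neg x _ hx =>
    obtain ⟨a, ha, b, hb, rfl⟩ := hx
    exact ⟨b, hb, a, ha, by abel⟩

/-- if `A ⊆ ℤ^d` is finite and the semigroup `ℕA` generates `ℤ^d` as a group,
then for any `β, γ ∈ ℤ^d` the intersection `(β + ℕA) ∩ (γ + ℕA)` contains a translate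
`γ'' + ℕA` of the semigroup. -/
theorem exists_translate_subset_inter {d : ℕ} (A : Finset (Fin d → ℤ))
    (hZA : AddSubgroup.closure (A : Set (Fin d → ℤ)) = ⊤)
    (β γ : Fin d → ℤ) :
    ∃ γ'' : Fin d → ℤ,
      γ'' +ᵥ ((AddSubmonoid.closure (A : Set (Fin d → ℤ)) : Set (Fin d → ℤ))) ⊆
        (β +ᵥ ((AddSubmonoid.closure (A : Set (Fin d → ℤ)) : Set (Fin d → ℤ)))) ∩
        (γ +ᵥ ((AddSubmonoid.closure (A : Set (Fin d → ℤ)) : Set (Fin d → ℤ)))) := by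
  have hmem : γ - β ∈ AddSubgroup.closure (A : Set (Fin d → ℤ)) := by
    rw [hZA]; trivial
  obtain ⟨a, ha, b, hb, hab⟩ := mem_closure_sub _ _ hmem
  refine ⟨β + a, fun x hx => ?_⟩
  obtain ⟨m, hm, rfl⟩ := hx
  constructor
  · exact ⟨a + m, add_mem ha hm, by simp [vadd_eq_add]; abel⟩
  · refine ⟨b + m, add_mem hb hm, ?_⟩
    have : β + a = γ + b := by
      have : γ = β + (a - b) := by rw [← hab]; abel
      rw [this]; abel
    simp [vadd_eq_add, this]; abel
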